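/- Let Q be a Markov generator on a finite set Ω reversible with respect to π, and let {Ω_i}_{i∈I} be a partition with projection chain (Q̄, π̄) and restriction chains (Q_i, π_i) as usual. Suppose couplings κ_{ij} of π_i, π_j are given for all pairs with Q̄(i,j) > 0, and let χ := min over all (x,y,i,j) with positive denominator of π(x)Q(x,y)/(π̄(i)Q̄(i,j)κ_{ij}(x,y)). Then the Poincaré constant satisfies λ(Q) ≥ min{ χ·λ(Q̄), min_i λ(Q_i) }. -/

import Mathlib

open Finset

/-- Expectation of `f` under `π`. -/
def expec {Ω : Type*} [Fintype Ω] (π f : Ω → ℝ) : ℝ := ∑ x, π x * f x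

/-- Variance of `f` under `π`. -/
def varOf {Ω : Type*} [Fintype Ω] (π f : Ω → ℝ) : ℝ :=
  expec π (fun x => f x ^ 2) - (expec π f) ^ 2

lemma cs_prob {α : Type*} (s : Finset α) (c g : α → ℝ) (hc : ∀ x ∈ s, 0 ≤ c x)
    (h1 : ∑ x ∈ s, c x = 1) : (∑ x ∈ s, c x * g x) ^ 2 ≤ ∑ x ∈ s, c x * g x ^ 2 := by
  have h := Finset.sum_mul_sq_le_sq_mul_sq s (fun x => Real.sqrt (c x))
    (fun x => Real.sqrt (c x) * g x)
  have e1 : ∑ x ∈ s, Real.sqrt (c x) * (Real.sqrt (c x) * g x) = ∑ x ∈ s, c x * g x :=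
    Finset.sum_congr rfl fun x hx => by rw [← mul_assoc, Real.mul_self_sqrt (hc x hx)]
  have e2 : ∑ x ∈ s, Real.sqrt (c x) ^ 2 = 1 := by
    rw [Finset.sum_congr rfl fun x hx => Real.sq_sqrt (hc x hx), h1]
  have e3 : ∑ x ∈ s, (Real.sqrt (c x) * g x) ^ 2 = ∑ x ∈ s, c x * g x ^ 2 :=
    Finset.sum_congr rfl fun x hx => by rw [mul_pow, Real.sq_sqrt (hc x hx)]
  rw [e1, e2, e3, one_mul] at h
  exact h

lemma varOf_nonneg {Ω : Type*} [Fintype Ω] (c f : Ω → ℝ) (hc : ∀ x, 0 ≤ c x)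
    (h1 : ∑ x, c x = 1) : 0 ≤ varOf c f := by
  have h := cs_prob univ c f (fun x _ => hc x) h1
  unfold varOf expec
  simpa using sub_nonneg.2 h

lemma dirichlet_sym {α : Type*} (s : Finset α) (μ : α → ℝ) (K : α → α → ℝ) (f : α → ℝ)
    (hrev : ∀ x ∈ s, ∀ y ∈ s, μ x * K x y = μ y * K y x) :
    ∑ x ∈ s, ∑ y ∈ s, μ x * K x y * (f x * (f x - f y)) =
      (1/2) * ∑ x ∈ s, ∑ y ∈ s, μ x * K x y * (f x - f y) ^ 2 := by
  have key : ∑ x ∈ s, ∑ y ∈ s, μ x * K x y * (f x * (f x - f y))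
      = ∑ x ∈ s, ∑ y ∈ s, μ x * K x y * (f y * (f y - f x)) := by
    rw [Finset.sum_comm]
    exact Finset.sum_congr rfl fun x hx => Finset.sum_congr rfl fun y hy => by
      rw [hrev y hy x hx]
  have expand : ∑ x ∈ s, ∑ y ∈ s, μ x * K x y * (f x - f y) ^ 2
      = ∑ x ∈ s, ∑ y ∈ s, (μ x * K x y * (f x * (f x - f y))
          + μ x * K x y * (f y * (f y - f x))) :=
    Finset.sum_congr rfl fun x _ => Finset.sum_congr rfl fun y _ => by ring
  simp only [Finset.sum_add_distrib] at expand
  rw [expand, ← key]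
  ring

lemma gen_dirichlet {α : Type*} [Fintype α] (μ : α → ℝ) (K : α → α → ℝ) (f : α → ℝ)
    (hrow : ∀ x, ∑ y, K x y = 0) :
    ∑ x, ∑ y, μ x * K x y * (f x * (f x - f y)) = -(∑ x, μ x * f x * ∑ y, K x y * f y) := by
  rw [← Finset.sum_neg_distrib]
  refine Finset.sum_congr rfl fun x _ => ?_
  have e : ∑ y, μ x * K x y * (f x * (f x - f y))
      = μ x * f x ^ 2 * (∑ y, K x y) - μ x * f x * ∑ y, K x y * f y := by
    rw [Finset.mul_sum, Finset.mul_sum, ← Finset.sum_sub_distrib]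
    exact Finset.sum_congr rfl fun y _ => by ring
  rw [e, hrow x]
  ring

/-- Poincaré case of the recursive decomposition lemma (Lemma 2.1):
if the projection chain satisfies a Poincaré inequality with constant `λbar`, each
restriction chain with constant `λlo i`, and the couplings have quality `χ`, then `Q`
satisfies a Poincaré inequality with constant `min (χ·λbar) (min_i λlo i)`. -/
theorem decomposition_poincare {Ω I : Type*} [Fintype Ω] [Fintype I] [Nonempty I]
    [DecidableEq Ω] [DecidableEq I]
    (π : Ω → ℝ) (Q : Ω → Ω → ℝ) (p : Ω → I)
    (hπ : ∀ x, 0 < π x) (hπ1 : ∑ x, π x = 1)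
    (hQoff : ∀ x y, x ≠ y → 0 ≤ Q x y)
    (hQrow : ∀ x, ∑ y, Q x y = 0)
    (hrev : ∀ x y, π x * Q x y = π y * Q y x)
    (hsurj : Function.Surjective p)
    -- projection chain
    (pbar : I → ℝ) (hpbar : ∀ i, pbar i = ∑ x ∈ univ.filter (fun x => p x = i), π x)
    (Qbar : I → I → ℝ)
    (hQbaroff : ∀ i j, i ≠ j → Qbar i j =
      (1 / pbar i) * ∑ x ∈ univ.filter (fun x => p x = i),
        ∑ y ∈ univ.filter (fun y => p y = j), π x * Q x y)
    (hQbarrow : ∀ i, ∑ j, Qbar i j = 0)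
    -- conditional measures
    (cond : I → Ω → ℝ)
    (hcond : ∀ i x, cond i x = if p x = i then π x / pbar i else 0)
    -- couplings and their quality χ
    (κ : I → I → Ω → Ω → ℝ) (hκ : ∀ i j x y, 0 ≤ κ i j x y)
    (hmarg1 : ∀ i j, i ≠ j → 0 < Qbar i j → ∀ x, p x = i →
      ∑ y ∈ univ.filter (fun y => p y = j), κ i j x y = cond i x)
    (hmarg2 : ∀ i j, i ≠ j → 0 < Qbar i j → ∀ y, p y = j →
      ∑ x ∈ univ.filter (fun x => p x = i), κ i j x y = cond j y)
    (χ : ℝ) (hχ : 0 ≤ χ)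
    (hχle : ∀ i j x y, i ≠ j → p x = i → p y = j → 0 < Qbar i j →
      χ * (pbar i * Qbar i j * κ i j x y) ≤ π x * Q x y)
    -- Poincaré inequalities for the projection and restriction chains
    (lbar : ℝ)
    (hproj : ∀ g : I → ℝ,
      -(∑ i, pbar i * g i * ∑ j, Qbar i j * g j) ≥ lbar * varOf pbar g)
    (llo : I → ℝ)
    (hres : ∀ i, ∀ f : Ω → ℝ,
      -(∑ x, cond i x * f x *
          ∑ y ∈ univ.filter (fun y => p y = i ∧ y ≠ x), Q x y * (f y - f x)) ≥
        llo i * varOf (cond i) f) :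
    ∀ f : Ω → ℝ,
      -(∑ x, π x * f x * ∑ y, Q x y * f y) ≥
        min (χ * lbar) (Finset.univ.inf' Finset.univ_nonempty llo) * varOf π f := by
  intro f
  classical
  -- basic facts
  have hmem : ∀ (i : I) (x : Ω), x ∈ univ.filter (fun x => p x = i) ↔ p x = i := by
    intro i x; simp
  have hpbar_pos : ∀ i, 0 < pbar i := by
    intro i
    obtain ⟨x, hx⟩ := hsurj i
    rw [hpbar i]
    exact Finset.sum_pos' (fun y _ => (hπ y).le) ⟨x, (hmem i x).2 hx, hπ x⟩
  have hcond_in : ∀ (i : I) (x : Ω), x ∈ univ.filter (fun x => p x = i) →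
      cond i x = π x / pbar i := by
    intro i x hx; rw [hcond, if_pos ((hmem i x).1 hx)]
  have hcond_out : ∀ (i : I) (x : Ω), x ∉ univ.filter (fun x => p x = i) → cond i x = 0 := by
    intro i x hx; rw [hcond, if_neg (fun h => hx ((hmem i x).2 h))]
  have hcond_nonneg : ∀ i x, 0 ≤ cond i x := by
    intro i x; rw [hcond]
    split
    · exact div_nonneg (hπ x).le (hpbar_pos i).le
    · exact le_refl 0
  have hpc : ∀ (i : I) (x : Ω), x ∈ univ.filter (fun x => p x = i) →
      pbar i * cond i x = π x := by
    intro i x hx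
    rw [hcond_in i x hx, mul_comm, div_mul_cancel₀ _ (hpbar_pos i).ne']
  have hcondall : ∀ (h : Ω → ℝ) (i : I),
      ∑ x, cond i x * h x = ∑ x ∈ univ.filter (fun x => p x = i), cond i x * h x :=
    fun h i => (Finset.sum_subset (subset_univ _)
      fun x _ hx => by rw [hcond_out i x hx, zero_mul]).symm
  have hcondsum : ∀ i, ∑ x ∈ univ.filter (fun x => p x = i), cond i x = 1 := by
    intro i
    have e : ∑ x ∈ univ.filter (fun x => p x = i), cond i x
        = (∑ x ∈ univ.filter (fun x => p x = i), π x) / pbar i := by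
      rw [Finset.sum_div]
      exact Finset.sum_congr rfl fun x hx => hcond_in i x hx
    rw [e, ← hpbar i, div_self (hpbar_pos i).ne']
  have hpbar1 : ∑ i, pbar i = 1 := by
    calc ∑ i, pbar i = ∑ i, ∑ x ∈ univ.filter (fun x => p x = i), π x :=
          Finset.sum_congr rfl fun i _ => hpbar i
      _ = ∑ x, π x := Finset.sum_fiberwise _ _ _
      _ = 1 := hπ1
  -- the projected function
  set g : I → ℝ := fun i => ∑ x ∈ univ.filter (fun x => p x = i), cond i x * f x with hgdef
  have hgi : ∀ i, ∑ x ∈ univ.filter (fun x => p x = i), cond i x * f x = g i := fun i => rfl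
  -- Dirichlet form of the full chain, symmetric form
  have hD : -(∑ x, π x * f x * ∑ y, Q x y * f y)
      = (1/2) * ∑ x, ∑ y, π x * Q x y * (f x - f y) ^ 2 := by
    rw [← gen_dirichlet π Q f hQrow]
    exact dirichlet_sym univ π Q f (fun x _ y _ => hrev x y)
  -- split into blocks
  set T : I → I → ℝ := fun i j => ∑ x ∈ univ.filter (fun x => p x = i),
      ∑ y ∈ univ.filter (fun y => p y = j), π x * Q x y * (f x - f y) ^ 2 with hTdef
  have hsplit : ∑ x, ∑ y, π x * Q x y * (f x - f y) ^ 2 = ∑ i, ∑ j, T i j := by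
    rw [← Finset.sum_fiberwise univ p (fun x => ∑ y, π x * Q x y * (f x - f y) ^ 2)]
    refine Finset.sum_congr rfl fun i _ => ?_
    calc ∑ x ∈ univ.filter (fun x => p x = i), ∑ y, π x * Q x y * (f x - f y) ^ 2
        = ∑ x ∈ univ.filter (fun x => p x = i), ∑ j, ∑ y ∈ univ.filter (fun y => p y = j),
            π x * Q x y * (f x - f y) ^ 2 :=
          Finset.sum_congr rfl fun x _ => (Finset.sum_fiberwise univ p _).symm
      _ = ∑ j, T i j := Finset.sum_comm
  have hsplit2 : ∑ i, ∑ j, T i j = ∑ i, T i i + ∑ i, ∑ j ∈ univ.erase i, T i j := by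
    rw [← Finset.sum_add_distrib]
    exact Finset.sum_congr rfl fun i _ => (Finset.add_sum_erase univ _ (mem_univ i)).symm
  -- within-block bound
  have hW : ∀ i, (1/2) * T i i ≥ pbar i * (llo i * varOf (cond i) f) := by
    intro i
    have hrevi : ∀ x ∈ univ.filter (fun x => p x = i), ∀ y ∈ univ.filter (fun x => p x = i),
        cond i x * Q x y = cond i y * Q y x := by
      intro x hx y hy
      rw [hcond_in i x hx, hcond_in i y hy, div_mul_eq_mul_div, div_mul_eq_mul_div, hrev]
    have hsym := dirichlet_sym (univ.filter (fun x => p x = i)) (cond i) Q f hrevi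
    have hRe : -(∑ x, cond i x * f x *
          ∑ y ∈ univ.filter (fun y => p y = i ∧ y ≠ x), Q x y * (f y - f x))
        = ∑ x ∈ univ.filter (fun x => p x = i), ∑ y ∈ univ.filter (fun x => p x = i),
            cond i x * Q x y * (f x * (f x - f y)) := by
      have e1 : ∑ x, cond i x * f x *
            ∑ y ∈ univ.filter (fun y => p y = i ∧ y ≠ x), Q x y * (f y - f x)
          = ∑ x ∈ univ.filter (fun x => p x = i), cond i x * f x *
            ∑ y ∈ univ.filter (fun y => p y = i ∧ y ≠ x), Q x y * (f y - f x) :=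
        (Finset.sum_subset (subset_univ _)
          fun x _ hx => by rw [hcond_out i x hx, zero_mul, zero_mul]).symm
      rw [e1, ← Finset.sum_neg_distrib]
      refine Finset.sum_congr rfl fun x hx => ?_
      have e2 : univ.filter (fun y => p y = i ∧ y ≠ x)
          = (univ.filter (fun x => p x = i)).erase x := by
        ext y; simp [Finset.mem_erase, and_comm]
      have e3 : ∑ y ∈ (univ.filter (fun x => p x = i)).erase x, Q x y * (f y - f x)
          = ∑ y ∈ univ.filter (fun x => p x = i), Q x y * (f y - f x) :=
        Finset.sum_erase _ (by simp)
      rw [e2, e3, Finset.mul_sum, ← Finset.sum_neg_distrib]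
      exact Finset.sum_congr rfl fun y _ => by ring
    have hT : T i i = pbar i * ∑ x ∈ univ.filter (fun x => p x = i),
        ∑ y ∈ univ.filter (fun x => p x = i), cond i x * Q x y * (f x - f y) ^ 2 := by
      rw [Finset.mul_sum]
      refine Finset.sum_congr rfl fun x hx => ?_
      rw [Finset.mul_sum]
      refine Finset.sum_congr rfl fun y _ => ?_
      rw [← hpc i x hx]; ring
    have hres' := hres i f
    rw [hRe, hsym] at hres'
    have h2 := mul_le_mul_of_nonneg_left hres' (hpbar_pos i).le
    rw [hT]
    linarith [h2]
  -- nonnegativity of Qbar off-diagonal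
  have hne : ∀ (i j : I) (x y : Ω), i ≠ j → x ∈ univ.filter (fun x => p x = i) →
      y ∈ univ.filter (fun y => p y = j) → x ≠ y := by
    intro i j x y hij hx hy h
    exact hij (by rw [← (hmem i x).1 hx, h, (hmem j y).1 hy])
  have hQbar_nonneg : ∀ i j, i ≠ j → 0 ≤ Qbar i j := by
    intro i j hij
    rw [hQbaroff i j hij]
    refine mul_nonneg (one_div_nonneg.2 (hpbar_pos i).le) ?_
    refine Finset.sum_nonneg fun x hx => Finset.sum_nonneg fun y hy =>
      mul_nonneg (hπ x).le (hQoff x y (hne i j x y hij hx hy))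
  -- between-block bound
  have hB2 : ∀ i j, i ≠ j → T i j ≥ χ * (pbar i * Qbar i j * (g i - g j) ^ 2) := by
    intro i j hij
    by_cases hq : 0 < Qbar i j
    · have hκ1 : ∑ x ∈ univ.filter (fun x => p x = i),
          ∑ y ∈ univ.filter (fun y => p y = j), κ i j x y = 1 := by
        calc ∑ x ∈ univ.filter (fun x => p x = i),
              ∑ y ∈ univ.filter (fun y => p y = j), κ i j x y
            = ∑ x ∈ univ.filter (fun x => p x = i), cond i x :=
              Finset.sum_congr rfl fun x hx => hmarg1 i j hij hq x ((hmem i x).1 hx)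
          _ = 1 := hcondsum i
      have hgd : ∑ x ∈ univ.filter (fun x => p x = i),
          ∑ y ∈ univ.filter (fun y => p y = j), κ i j x y * (f x - f y) = g i - g j := by
        have e0 : ∀ x ∈ univ.filter (fun x => p x = i),
            ∑ y ∈ univ.filter (fun y => p y = j), κ i j x y * (f x - f y)
            = f x * (∑ y ∈ univ.filter (fun y => p y = j), κ i j x y)
              - ∑ y ∈ univ.filter (fun y => p y = j), κ i j x y * f y := by
          intro x _
          rw [Finset.mul_sum, ← Finset.sum_sub_distrib]
          exact Finset.sum_congr rfl fun y _ => by ring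
        rw [Finset.sum_congr rfl e0, Finset.sum_sub_distrib]
        have ea : ∑ x ∈ univ.filter (fun x => p x = i),
            f x * (∑ y ∈ univ.filter (fun y => p y = j), κ i j x y) = g i := by
          calc ∑ x ∈ univ.filter (fun x => p x = i),
                f x * (∑ y ∈ univ.filter (fun y => p y = j), κ i j x y)
              = ∑ x ∈ univ.filter (fun x => p x = i), cond i x * f x :=
                Finset.sum_congr rfl fun x hx => by
                  rw [hmarg1 i j hij hq x ((hmem i x).1 hx), mul_comm]
            _ = g i := hgi i
        have eb : ∑ x ∈ univ.filter (fun x => p x = i),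
            ∑ y ∈ univ.filter (fun y => p y = j), κ i j x y * f y = g j := by
          rw [Finset.sum_comm]
          calc ∑ y ∈ univ.filter (fun y => p y = j),
                ∑ x ∈ univ.filter (fun x => p x = i), κ i j x y * f y
              = ∑ y ∈ univ.filter (fun y => p y = j),
                  (∑ x ∈ univ.filter (fun x => p x = i), κ i j x y) * f y :=
                Finset.sum_congr rfl fun y _ => (Finset.sum_mul _ _ _).symm
            _ = ∑ y ∈ univ.filter (fun y => p y = j), cond j y * f y :=
                Finset.sum_congr rfl fun y hy => by
                  rw [hmarg2 i j hij hq y ((hmem j y).1 hy)]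
            _ = g j := hgi j
        rw [ea, eb]
      have hcs : (g i - g j) ^ 2 ≤ ∑ x ∈ univ.filter (fun x => p x = i),
          ∑ y ∈ univ.filter (fun y => p y = j), κ i j x y * (f x - f y) ^ 2 := by
        have h := cs_prob ((univ.filter (fun x => p x = i)) ×ˢ (univ.filter (fun y => p y = j)))
          (fun q => κ i j q.1 q.2) (fun q => f q.1 - f q.2)
          (fun q _ => hκ i j q.1 q.2) (by rw [Finset.sum_product]; exact hκ1)
        rw [Finset.sum_product, Finset.sum_product] at h
        rw [← hgd]
        exact h
      have hpt : χ * (pbar i * Qbar i j) * (∑ x ∈ univ.filter (fun x => p x = i),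
          ∑ y ∈ univ.filter (fun y => p y = j), κ i j x y * (f x - f y) ^ 2) ≤ T i j := by
        rw [Finset.mul_sum]
        refine Finset.sum_le_sum fun x hx => ?_
        rw [Finset.mul_sum]
        refine Finset.sum_le_sum fun y hy => ?_
        have h := hχle i j x y hij ((hmem i x).1 hx) ((hmem j y).1 hy) hq
        calc χ * (pbar i * Qbar i j) * (κ i j x y * (f x - f y) ^ 2)
            = (χ * (pbar i * Qbar i j * κ i j x y)) * (f x - f y) ^ 2 := by ring
          _ ≤ (π x * Q x y) * (f x - f y) ^ 2 :=
              mul_le_mul_of_nonneg_right h (sq_nonneg _)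
      have hc0 : 0 ≤ χ * (pbar i * Qbar i j) :=
        mul_nonneg hχ (mul_nonneg (hpbar_pos i).le hq.le)
      calc χ * (pbar i * Qbar i j * (g i - g j) ^ 2)
          = χ * (pbar i * Qbar i j) * (g i - g j) ^ 2 := by ring
        _ ≤ χ * (pbar i * Qbar i j) * (∑ x ∈ univ.filter (fun x => p x = i),
              ∑ y ∈ univ.filter (fun y => p y = j), κ i j x y * (f x - f y) ^ 2) :=
            mul_le_mul_of_nonneg_left hcs hc0
        _ ≤ T i j := hpt
    · have h0 : Qbar i j = 0 := le_antisymm (not_lt.1 hq) (hQbar_nonneg i j hij)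
      rw [h0]
      simp only [mul_zero, zero_mul]
      exact Finset.sum_nonneg fun x hx => Finset.sum_nonneg fun y hy =>
        mul_nonneg (mul_nonneg (hπ x).le (hQoff x y (hne i j x y hij hx hy))) (sq_nonneg _)
  -- reversibility of the projection chain
  have hrevbar : ∀ i j, pbar i * Qbar i j = pbar j * Qbar j i := by
    intro i j
    by_cases hij : i = j
    · rw [hij]
    · have e : ∀ a b : I, a ≠ b → pbar a * Qbar a b
          = ∑ x ∈ univ.filter (fun x => p x = a),
              ∑ y ∈ univ.filter (fun y => p y = b), π x * Q x y := by
        intro a b hab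
        rw [hQbaroff a b hab, ← mul_assoc, mul_one_div, div_self (hpbar_pos a).ne', one_mul]
      rw [e i j hij, e j i (Ne.symm hij), Finset.sum_comm]
      exact Finset.sum_congr rfl fun y _ => Finset.sum_congr rfl fun x _ => hrev _ _
  -- projection Dirichlet form comparison
  have hsymbar := dirichlet_sym univ pbar Qbar g (fun i _ j _ => hrevbar i j)
  have hgenbar := gen_dirichlet pbar Qbar g hQbarrow
  have hproj' := hproj g
  rw [← hgenbar, hsymbar] at hproj'
  -- hproj' : (1/2) * ∑ i, ∑ j, pbar i * Qbar i j * (g i - g j)^2 ≥ lbar * varOf pbar g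
  have hBoff : ∑ i, ∑ j ∈ univ.erase i, T i j
      ≥ χ * ∑ i, ∑ j, pbar i * Qbar i j * (g i - g j) ^ 2 := by
    have ediag : ∀ i : I, ∑ j, pbar i * Qbar i j * (g i - g j) ^ 2
        = ∑ j ∈ univ.erase i, pbar i * Qbar i j * (g i - g j) ^ 2 :=
      fun i => (Finset.sum_erase _ (by simp)).symm
    rw [Finset.mul_sum]
    refine Finset.sum_le_sum fun i _ => ?_
    rw [ediag i, Finset.mul_sum]
    refine Finset.sum_le_sum fun j hj => ?_
    have hij : i ≠ j := (Finset.mem_erase.1 hj).1.symm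
    exact hB2 i j hij
  -- within-block total
  have hWsum : ∑ i, (1/2) * T i i ≥ ∑ i, pbar i * (llo i * varOf (cond i) f) :=
    Finset.sum_le_sum fun i _ => hW i
  -- variance decomposition
  have hEdec : ∀ h : Ω → ℝ, ∑ x, π x * h x
      = ∑ i, pbar i * ∑ x ∈ univ.filter (fun x => p x = i), cond i x * h x := by
    intro h
    rw [← Finset.sum_fiberwise univ p (fun x => π x * h x)]
    refine Finset.sum_congr rfl fun i _ => ?_
    rw [Finset.mul_sum]
    exact Finset.sum_congr rfl fun x hx => by rw [← hpc i x hx]; ring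
  have hv_i : ∀ i, varOf (cond i) f
      = (∑ x ∈ univ.filter (fun x => p x = i), cond i x * f x ^ 2) - g i ^ 2 := by
    intro i
    simp only [varOf, expec]
    rw [hcondall (fun x => f x ^ 2) i, hcondall f i, hgi i]
  have hvdec : varOf π f = (∑ i, pbar i * varOf (cond i) f) + varOf pbar g := by
    have hsv : ∑ i, pbar i * varOf (cond i) f
        = ∑ i, pbar i * (∑ x ∈ univ.filter (fun x => p x = i), cond i x * f x ^ 2)
          - ∑ i, pbar i * g i ^ 2 := by
      rw [← Finset.sum_sub_distrib]
      exact Finset.sum_congr rfl fun i _ => by rw [hv_i i]; ring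
    rw [hsv]
    simp only [varOf, expec]
    rw [hEdec (fun x => f x ^ 2), hEdec f]
    simp only [hgi]
    ring
  -- nonnegativity of the variance pieces
  have hvar_i : ∀ i, 0 ≤ varOf (cond i) f := by
    intro i
    refine varOf_nonneg (cond i) f (hcond_nonneg i) ?_
    rw [show ∑ x, cond i x = ∑ x, cond i x * 1 by simp, hcondall (fun _ => 1) i]
    simpa using hcondsum i
  have hvarbar : 0 ≤ varOf pbar g := varOf_nonneg pbar g (fun i => (hpbar_pos i).le) hpbar1
  -- the minimum constant
  set m := min (χ * lbar) (Finset.univ.inf' Finset.univ_nonempty llo) with hm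
  have hm1 : m ≤ χ * lbar := min_le_left _ _
  have hm2 : ∀ i, m ≤ llo i := fun i =>
    le_trans (min_le_right _ _) (Finset.inf'_le _ (mem_univ i))
  -- assemble
  have hWfinal : ∑ i, pbar i * (llo i * varOf (cond i) f)
      ≥ m * ∑ i, pbar i * varOf (cond i) f := by
    rw [Finset.mul_sum]
    refine Finset.sum_le_sum fun i _ => ?_
    calc m * (pbar i * varOf (cond i) f) = pbar i * (m * varOf (cond i) f) := by ring
      _ ≤ pbar i * (llo i * varOf (cond i) f) :=
        mul_le_mul_of_nonneg_left (mul_le_mul_of_nonneg_right (hm2 i) (hvar_i i)) (hpbar_pos i).le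
  have hBfinal : (1/2) * ∑ i, ∑ j ∈ univ.erase i, T i j ≥ m * varOf pbar g := by
    have h1 : (1/2) * ∑ i, ∑ j ∈ univ.erase i, T i j
        ≥ (1/2) * (χ * ∑ i, ∑ j, pbar i * Qbar i j * (g i - g j) ^ 2) := by
      have := hBoff
      linarith
    have h2 : χ * ((1/2) * ∑ i, ∑ j, pbar i * Qbar i j * (g i - g j) ^ 2)
        ≥ χ * (lbar * varOf pbar g) := mul_le_mul_of_nonneg_left hproj' hχ
    have h3 : m * varOf pbar g ≤ (χ * lbar) * varOf pbar g :=
      mul_le_mul_of_nonneg_right hm1 hvarbar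
    nlinarith [h1, h2, h3]
  -- final chain
  rw [hD, hsplit, hsplit2, hvdec]
  have e4 : (1/2) * (∑ i, T i i + ∑ i, ∑ j ∈ univ.erase i, T i j)
      = (∑ i, (1/2) * T i i) + (1/2) * ∑ i, ∑ j ∈ univ.erase i, T i j := by
    rw [mul_add, Finset.mul_sum]
  rw [e4, mul_add]
  exact add_le_add (le_trans hWfinal hWsum) hBfinal
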